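/- For every positive integer n and every ρ > 0, the improper integral ∫_ρ^∞ J₁(x)/x^{2n+1} dx equals (1/(4n²−1))·[2n·J₁(ρ)/ρ^{2n} + J₁′(ρ)/ρ^{2n−1} − ∫_ρ^∞ J₁(x)/x^{2n−1} dx]. -/

import Mathlib

open Real MeasureTheory Filter
open Topology

/-- Bessel function of the first kind of nonnegative integer order. -/
noncomputable def besselJ (n : ℕ) (x : ℝ) : ℝ :=
  ∑' k : ℕ, (-1 : ℝ) ^ k / (Nat.factorial k * Nat.factorial (n + k)) * (x / 2) ^ (2 * k + n)

/-- Struve function of nonnegative integer order. -/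
noncomputable def struveH (n : ℕ) (x : ℝ) : ℝ :=
  ∑' k : ℕ, (-1 : ℝ) ^ k /
    (Real.Gamma (k + 3 / 2) * Real.Gamma (k + n + 3 / 2)) * (x / 2) ^ (2 * k + n + 1)

noncomputable def bc (k : ℕ) : ℝ := (-1)^k / (k.factorial * (k+1).factorial)

noncomputable def g0 (k : ℕ) (x : ℝ) : ℝ := bc k * (x/2)^(2*k+1)
noncomputable def g1 (k : ℕ) (x : ℝ) : ℝ := bc k * (2*k+1) * (x/2)^(2*k) / 2
noncomputable def g2 (k : ℕ) (x : ℝ) : ℝ := bc k * (2*k+1) * (2*k) * (x/2)^(2*k-1) / 4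

lemma abs_bc_le (k : ℕ) : |bc k| ≤ 1 / k.factorial := by
  rw [bc, abs_div, abs_pow, abs_neg, abs_one, one_pow]
  rw [abs_of_nonneg (by positivity : (0:ℝ) ≤ (k.factorial : ℝ) * ((k+1).factorial : ℝ))]
  apply div_le_div_of_nonneg_left (by norm_num) (by positivity)
  have h1 : (1:ℝ) ≤ ((k+1).factorial : ℝ) := by exact_mod_cast (k+1).factorial_pos
  have h2 : (0:ℝ) < (k.factorial : ℝ) := by exact_mod_cast k.factorial_pos
  nlinarith

lemma sq_le_ninepow (k : ℕ) : (2*(k:ℝ)+1)^2 ≤ 9^k := by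
  induction k with
  | zero => norm_num
  | succ k ih =>
    have h : (2*((k:ℝ)+1)+1)^2 ≤ 9 * (2*(k:ℝ)+1)^2 := by nlinarith [Nat.cast_nonneg (α := ℝ) k]
    have h9 : (0:ℝ) < 9^k := by positivity
    calc (2*(((k:ℕ)+1:ℕ):ℝ)+1)^2 = (2*((k:ℝ)+1)+1)^2 := by push_cast; ring
    _ ≤ 9 * (2*(k:ℝ)+1)^2 := h
    _ ≤ 9 * 9^k := by nlinarith
    _ = 9^(k+1) := by ring

noncomputable def ub (R : ℝ) (k : ℕ) : ℝ := (2*(k:ℝ)+1)^2 * (R/2)^(2*k+1) / k.factorial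

lemma summable_ub {R : ℝ} (hR : 0 ≤ R) : Summable (ub R) := by
  refine Summable.of_nonneg_of_le (fun k => by unfold ub; positivity) (fun k => ?_)
    ((Real.summable_pow_div_factorial (9 * (R^2/4))).mul_left (R/2))
  rw [ub]
  have h1 : (R/2)^(2*k+1) = (R/2) * (R^2/4)^k := by rw [pow_succ', pow_mul]; ring_nf
  rw [h1]
  have h2 : (2*(k:ℝ)+1)^2 * (R/2 * (R^2/4)^k) ≤ 9^k * (R/2 * (R^2/4)^k) :=
    mul_le_mul_of_nonneg_right (sq_le_ninepow k) (by positivity)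
  calc (2*(k:ℝ)+1)^2 * (R/2 * (R^2/4)^k) / k.factorial
      ≤ 9^k * (R/2 * (R^2/4)^k) / k.factorial :=
        div_le_div_of_nonneg_right h2 (by positivity)
    _ = R/2 * ((9*(R^2/4))^k / k.factorial) := by rw [mul_pow]; ring

lemma bound_core {x R : ℝ} (hR : 2 ≤ R) (hx : |x| ≤ R) {k e : ℕ} (he : e ≤ 2*k+1)
    (C : ℝ) (hC : |C| ≤ (2*(k:ℝ)+1)^2 / k.factorial) : ‖C * (x/2)^e‖ ≤ ub R k := by
  rw [Real.norm_eq_abs, abs_mul, abs_pow]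
  have hB : |x/2| ≤ R/2 := by
    rw [abs_div, abs_two]; exact div_le_div_of_nonneg_right hx (by norm_num)
  have h1 : |x/2|^e ≤ (R/2)^e := pow_le_pow_left₀ (abs_nonneg _) hB e
  have h2 : (R/2)^e ≤ (R/2)^(2*k+1) := pow_le_pow_right₀ (by linarith) he
  calc |C| * |x/2|^e ≤ ((2*(k:ℝ)+1)^2 / k.factorial) * (R/2)^(2*k+1) :=
        mul_le_mul hC (h1.trans h2) (by positivity) (by positivity)
    _ = ub R k := by rw [ub]; ring

lemma bound_g0 {x R : ℝ} (hR : 2 ≤ R) (hx : |x| ≤ R) (k : ℕ) : ‖g0 k x‖ ≤ ub R k := by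
  rw [g0]
  refine bound_core hR hx le_rfl _ ((abs_bc_le k).trans ?_)
  have h2 : (0:ℝ) < (k.factorial : ℝ) := by exact_mod_cast k.factorial_pos
  apply div_le_div_of_nonneg_right ?_ h2.le
  nlinarith [Nat.cast_nonneg (α := ℝ) k]

lemma bound_g1 {x R : ℝ} (hR : 2 ≤ R) (hx : |x| ≤ R) (k : ℕ) : ‖g1 k x‖ ≤ ub R k := by
  have heq : g1 k x = (bc k * (2*(k:ℝ)+1) / 2) * (x/2)^(2*k) := by rw [g1]; push_cast; ring
  rw [heq]
  refine bound_core hR hx (by omega) _ ?_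
  have h2 : (0:ℝ) < (k.factorial : ℝ) := by exact_mod_cast k.factorial_pos
  have h3 := abs_bc_le k
  have h4 : |bc k * (2*(k:ℝ)+1) / 2| = |bc k| * (2*(k:ℝ)+1) / 2 := by
    rw [abs_div, abs_mul, abs_two, abs_of_nonneg (by positivity : (0:ℝ) ≤ 2*(k:ℝ)+1)]
  rw [h4]
  have h6 : |bc k| * (k.factorial:ℝ) ≤ 1 := (le_div_iff₀ h2).1 h3
  rw [div_le_div_iff₀ (by norm_num) h2]
  have h5 : (0:ℝ) ≤ (k:ℝ) := Nat.cast_nonneg k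
  nlinarith [mul_le_mul_of_nonneg_left h6 (by positivity : (0:ℝ) ≤ 2*(k:ℝ)+1)]

lemma bound_g2 {x R : ℝ} (hR : 2 ≤ R) (hx : |x| ≤ R) (k : ℕ) : ‖g2 k x‖ ≤ ub R k := by
  have heq : g2 k x = (bc k * (2*(k:ℝ)+1) * (2*(k:ℝ)) / 4) * (x/2)^(2*k-1) := by
    rw [g2]; push_cast; ring
  rw [heq]
  refine bound_core hR hx (by omega) _ ?_
  have h2 : (0:ℝ) < (k.factorial : ℝ) := by exact_mod_cast k.factorial_pos
  have h3 := abs_bc_le k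
  have h4 : |bc k * (2*(k:ℝ)+1) * (2*(k:ℝ)) / 4| = |bc k| * (2*(k:ℝ)+1) * (2*(k:ℝ)) / 4 := by
    rw [abs_div, abs_mul, abs_mul,
      abs_of_nonneg (by positivity : (0:ℝ) ≤ 2*(k:ℝ)+1),
      abs_of_nonneg (by positivity : (0:ℝ) ≤ 2*(k:ℝ))]
    norm_num
  rw [h4]
  rw [div_le_div_iff₀ (by norm_num) h2]
  have h5 : (0 ≤ (k:ℝ)) := Nat.cast_nonneg k
  have h6 : |bc k| * (k.factorial:ℝ) ≤ 1 := (le_div_iff₀ h2).1 h3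
  nlinarith [mul_le_mul_of_nonneg_left h6
    (by positivity : (0:ℝ) ≤ (2*(k:ℝ)+1)*(2*(k:ℝ)))]

lemma hasDerivAt_g0 (k : ℕ) (x : ℝ) : HasDerivAt (g0 k) (g1 k x) x := by
  have h : HasDerivAt (fun y : ℝ => (y/2)^(2*k+1))
      (((2*k+1 : ℕ) : ℝ) * (x/2)^(2*k) * (1/2)) x := by
    simpa [Pi.pow_def] using ((hasDerivAt_id x).div_const 2).pow (2*k+1)
  have h2 : HasDerivAt (g0 k) (bc k * (((2*k+1:ℕ):ℝ) * (x/2)^(2*k) * (1/2))) x :=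
    h.const_mul (bc k)
  convert h2 using 1
  rw [g1]; push_cast; ring

lemma hasDerivAt_g1 (k : ℕ) (x : ℝ) : HasDerivAt (g1 k) (g2 k x) x := by
  have h : HasDerivAt (fun y : ℝ => (y/2)^(2*k))
      (((2*k : ℕ) : ℝ) * (x/2)^(2*k-1) * (1/2)) x := by
    simpa [Pi.pow_def] using ((hasDerivAt_id x).div_const 2).pow (2*k)
  have h2 : HasDerivAt (g1 k) (bc k * (2*(k:ℝ)+1) * (((2*k:ℕ):ℝ) * (x/2)^(2*k-1) * (1/2)) / 2) x :=
    ((h.const_mul (bc k * (2*(k:ℝ)+1))).div_const 2)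
  convert h2 using 1
  rw [g2]; push_cast; ring

lemma summable_g0 (x : ℝ) : Summable (fun k => g0 k x) :=
  Summable.of_norm_bounded (summable_ub (by positivity : (0:ℝ) ≤ |x|+2))
    (fun k => bound_g0 (by linarith [abs_nonneg x]) (by linarith [abs_nonneg x]) k)

lemma summable_g1 (x : ℝ) : Summable (fun k => g1 k x) :=
  Summable.of_norm_bounded (summable_ub (by positivity : (0:ℝ) ≤ |x|+2))
    (fun k => bound_g1 (by linarith [abs_nonneg x]) (by linarith [abs_nonneg x]) k)

lemma summable_g2 (x : ℝ) : Summable (fun k => g2 k x) :=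
  Summable.of_norm_bounded (summable_ub (by positivity : (0:ℝ) ≤ |x|+2))
    (fun k => bound_g2 (by linarith [abs_nonneg x]) (by linarith [abs_nonneg x]) k)

noncomputable def Jf (x : ℝ) : ℝ := ∑' k, g0 k x
noncomputable def Jf1 (x : ℝ) : ℝ := ∑' k, g1 k x
noncomputable def Jf2 (x : ℝ) : ℝ := ∑' k, g2 k x

lemma hasDerivAt_Jf (x : ℝ) : HasDerivAt Jf (Jf1 x) x := by
  set R : ℝ := |x| + 2 with hR
  have hR2 : (2:ℝ) ≤ R := by rw [hR]; linarith [abs_nonneg x]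
  refine hasDerivAt_tsum_of_isPreconnected (summable_ub (by linarith : (0:ℝ) ≤ R))
    (isOpen_Ioo (a := -R) (b := R)) (convex_Ioo _ _).isPreconnected
    (fun k y _ => hasDerivAt_g0 k y) (fun k y hy => ?_) ?_ (summable_g0 x) ?_
  · exact bound_g1 hR2 (abs_le.2 ⟨hy.1.le, hy.2.le⟩) k
  · constructor <;> [linarith [neg_abs_le x]; linarith [le_abs_self x]]
  · constructor <;> [linarith [neg_abs_le x]; linarith [le_abs_self x]]

lemma hasDerivAt_Jf1 (x : ℝ) : HasDerivAt Jf1 (Jf2 x) x := by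
  set R : ℝ := |x| + 2 with hR
  have hR2 : (2:ℝ) ≤ R := by rw [hR]; linarith [abs_nonneg x]
  refine hasDerivAt_tsum_of_isPreconnected (summable_ub (by linarith : (0:ℝ) ≤ R))
    (isOpen_Ioo (a := -R) (b := R)) (convex_Ioo _ _).isPreconnected
    (fun k y _ => hasDerivAt_g1 k y) (fun k y hy => ?_) ?_ (summable_g1 x) ?_
  · exact bound_g2 hR2 (abs_le.2 ⟨hy.1.le, hy.2.le⟩) k
  · constructor <;> [linarith [neg_abs_le x]; linarith [le_abs_self x]]
  · constructor <;> [linarith [neg_abs_le x]; linarith [le_abs_self x]]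

lemma besselJ_eq_Jf : besselJ 1 = Jf := by
  funext x
  rw [besselJ, Jf]
  refine tsum_congr (fun k => ?_)
  rw [g0, bc, Nat.add_comm 1 k]

lemma bc_succ (k : ℕ) : 4*((k:ℝ)+1)*((k:ℝ)+2)*bc (k+1) = -4*bc k := by
  rw [bc, bc, pow_succ, Nat.factorial_succ (k+1), Nat.factorial_succ k]
  have h0 : ((k.factorial : ℝ)) ≠ 0 := by exact_mod_cast k.factorial_ne_zero
  have h1 : ((k:ℝ)+1) ≠ 0 := by positivity
  have h2 : ((k:ℝ)+2) ≠ 0 := by positivity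
  push_cast
  field_simp
  ring

lemma ode (x : ℝ) : x^2 * Jf2 x + x * Jf1 x + (x^2 - 1) * Jf x = 0 := by
  have s0 := summable_g0 x
  have s1 := summable_g1 x
  have s2 := summable_g2 x
  set af : ℕ → ℝ := fun k => 4*(k:ℝ)*((k:ℝ)+1)*bc k*(x/2)^(2*k+1) with haf
  set bf : ℕ → ℝ := fun k => 4*bc k*(x/2)^(2*k+3) with hbf
  have hTab : ∀ k, x^2 * g2 k x + x * g1 k x + (x^2-1) * g0 k x = af k + bf k := by
    intro k
    cases k with
    | zero => simp [g0, g1, g2, haf, hbf, bc]; ring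
    | succ k =>
      have e1 : 2*(k+1)-1 = 2*k+1 := by omega
      rw [g0, g1, g2, e1, haf, hbf]
      push_cast
      ring
  have hb : Summable bf := by
    refine ((s0.mul_left (4*(x/2)^2)).congr (fun k => ?_))
    rw [hbf, g0]; ring
  have hT : Summable (fun k => x^2 * g2 k x + x * g1 k x + (x^2-1) * g0 k x) :=
    ((s2.mul_left (x^2)).add (s1.mul_left x)).add (s0.mul_left (x^2-1))
  have ha : Summable af := by
    refine (hT.sub hb).congr (fun k => ?_)
    simp only [hTab k]; ring
  have key : ∀ k, af (k+1) = - bf k := by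
    intro k
    rw [haf, hbf]
    have := bc_succ k
    push_cast
    have e2 : (x/2)^(2*(k+1)+1) = (x/2)^(2*k+3) := by ring_nf
    rw [e2]
    linear_combination ((x/2)^(2*k+3)) * this
  have h2' : x^2 * Jf2 x = ∑' k, x^2 * g2 k x := by rw [Jf2, tsum_mul_left]
  have h1' : x * Jf1 x = ∑' k, x * g1 k x := by rw [Jf1, tsum_mul_left]
  have h0' : (x^2-1) * Jf x = ∑' k, (x^2-1) * g0 k x := by rw [Jf, tsum_mul_left]
  rw [h2', h1', h0', ← Summable.tsum_add (s2.mul_left _) (s1.mul_left _),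
    ← Summable.tsum_add ((s2.mul_left _).add (s1.mul_left _)) (s0.mul_left _)]
  have : ∑' k, (x^2 * g2 k x + x * g1 k x + (x^2-1) * g0 k x) = ∑' k, (af k + bf k) :=
    tsum_congr hTab
  rw [this, Summable.tsum_add ha hb]
  have hshift : ∑' k, af k = af 0 + ∑' k, af (k+1) := Summable.tsum_eq_zero_add ha
  have haf0 : af 0 = 0 := by rw [haf]; norm_num
  have : ∑' k, af (k+1) = ∑' k, - bf k := tsum_congr key
  rw [hshift, haf0, this, tsum_neg]
  ring

noncomputable def uu (x : ℝ) : ℝ := Real.sqrt x * Jf x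
noncomputable def vv (x : ℝ) : ℝ := Jf x / (2 * Real.sqrt x) + Real.sqrt x * Jf1 x
noncomputable def GG (x : ℝ) : ℝ := (uu x^2 + vv x^2) * Real.exp (3/4 * x⁻¹)

lemma hasDerivAt_uu {x : ℝ} (hx : 0 < x) : HasDerivAt uu (vv x) x := by
  have h := (Real.hasDerivAt_sqrt hx.ne').mul (hasDerivAt_Jf x)
  refine h.congr_deriv (Eq.symm ?_)
  rw [vv]; ring

lemma hasDerivAt_vv {x : ℝ} (hx : 0 < x) : HasDerivAt vv ((3/(4*x^2) - 1) * uu x) x := by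
  obtain ⟨s, hs_pos, rfl⟩ : ∃ s : ℝ, 0 < s ∧ s^2 = x :=
    ⟨Real.sqrt x, by positivity, Real.sq_sqrt hx.le⟩
  have hss : Real.sqrt (s^2) = s := Real.sqrt_sq hs_pos.le
  have hs : Real.sqrt (s^2) ≠ 0 := by rw [hss]; exact hs_pos.ne'
  have hd : HasDerivAt (fun y => 2 * Real.sqrt y) (2 * (1/(2*Real.sqrt (s^2)))) (s^2) :=
    (Real.hasDerivAt_sqrt hx.ne').const_mul 2
  have h1 : HasDerivAt (fun y => Jf y / (2 * Real.sqrt y))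
      ((Jf1 (s^2) * (2 * Real.sqrt (s^2)) - Jf (s^2) * (2 * (1/(2*Real.sqrt (s^2))))) /
        (2 * Real.sqrt (s^2))^2) (s^2) :=
    (hasDerivAt_Jf (s^2)).div hd (by positivity)
  have h2 : HasDerivAt (fun y => Real.sqrt y * Jf1 y)
      (1/(2*Real.sqrt (s^2)) * Jf1 (s^2) + Real.sqrt (s^2) * Jf2 (s^2)) (s^2) :=
    (Real.hasDerivAt_sqrt hx.ne').mul (hasDerivAt_Jf1 (s^2))
  have h := h1.add h2
  refine h.congr_deriv (Eq.symm ?_)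
  have hode := ode (s^2)
  rw [uu, hss]
  field_simp
  linear_combination (-16) * hode

lemma deriv_GG_nonpos {x : ℝ} (hx : 0 < x) :
    HasDerivAt GG (-(Real.exp (3/4 * x⁻¹) * (3/(4*x^2)) * (uu x - vv x)^2)) x := by
  have hE : HasDerivAt (fun y => uu y^2 + vv y^2)
      (2 * uu x ^ 1 * vv x + 2 * vv x ^ 1 * ((3/(4*x^2) - 1) * uu x)) x :=
    ((hasDerivAt_uu hx).pow 2).add ((hasDerivAt_vv hx).pow 2)
  have hexp : HasDerivAt (fun y : ℝ => Real.exp (3/4 * y⁻¹))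
      (Real.exp (3/4 * x⁻¹) * (3/4 * (-(x^2)⁻¹))) x :=
    (((hasDerivAt_inv hx.ne').const_mul (3/4 : ℝ))).exp
  have h := hE.mul hexp
  refine h.congr_deriv (Eq.symm ?_)
  have hx0 : x ≠ 0 := hx.ne'
  field_simp
  ring

lemma GG_antitone {a x : ℝ} (ha : 0 < a) (hx : a ≤ x) : GG x ≤ GG a := by
  have hmono : AntitoneOn GG (Set.Ici a) := by
    apply antitoneOn_of_deriv_nonpos (convex_Ici a)
    · intro y hy
      exact (deriv_GG_nonpos (lt_of_lt_of_le ha hy)).continuousAt.continuousWithinAt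
    · intro y hy
      rw [interior_Ici] at hy
      exact (deriv_GG_nonpos (ha.trans hy)).differentiableAt.differentiableWithinAt
    · intro y hy
      rw [interior_Ici] at hy
      rw [(deriv_GG_nonpos (ha.trans hy)).deriv]
      have h1 : (0:ℝ) < Real.exp (3/4 * y⁻¹) := Real.exp_pos _
      have hy0 : (0:ℝ) < y := ha.trans hy
      have h2 : (0:ℝ) < 3/(4*y^2) := div_pos (by norm_num) (by nlinarith)
      have h3 := mul_nonneg (mul_pos h1 h2).le (sq_nonneg (uu y - vv y))
      linarith
  exact hmono (Set.self_mem_Ici) hx hx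

lemma sq_le_GG {a x : ℝ} (ha : 0 < a) (hx : a ≤ x) :
    uu x^2 ≤ GG a ∧ vv x^2 ≤ GG a := by
  have hxpos : 0 < x := ha.trans_le hx
  have h1 : (1:ℝ) ≤ Real.exp (3/4 * x⁻¹) := by
    rw [Real.one_le_exp_iff]
    exact le_of_lt (mul_pos (by norm_num) (inv_pos.2 hxpos))
  have h2 : uu x^2 + vv x^2 ≤ GG x := by
    rw [GG]
    nlinarith [sq_nonneg (uu x), sq_nonneg (vv x)]
  have h3 := (h2.trans (GG_antitone ha hx))
  constructor <;> nlinarith [sq_nonneg (uu x), sq_nonneg (vv x)]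

lemma decay {a : ℝ} (ha : 0 < a) : ∃ D : ℝ, 0 ≤ D ∧ ∀ x, a ≤ x →
    |Jf x| ≤ D / Real.sqrt x ∧ |Jf1 x| ≤ D / Real.sqrt x := by
  set C := Real.sqrt (GG a) with hC
  have hC0 : 0 ≤ C := Real.sqrt_nonneg _
  refine ⟨C + C/(2*a), by positivity, fun x hx => ?_⟩
  have hxpos : 0 < x := ha.trans_le hx
  have hs : (0:ℝ) < Real.sqrt x := Real.sqrt_pos.2 hxpos
  have hsq : Real.sqrt x ^ 2 = x := Real.sq_sqrt hxpos.le
  obtain ⟨h1, h2⟩ := sq_le_GG ha hx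
  have hu : |uu x| ≤ C := by
    rw [hC, ← Real.sqrt_sq_eq_abs]
    exact Real.sqrt_le_sqrt h1
  have hv : |vv x| ≤ C := by
    rw [hC, ← Real.sqrt_sq_eq_abs]
    exact Real.sqrt_le_sqrt h2
  have hJf : |Jf x| ≤ C / Real.sqrt x := by
    have : Jf x = uu x / Real.sqrt x := by rw [uu]; field_simp
    rw [this, abs_div, abs_of_pos hs]
    exact div_le_div_of_nonneg_right hu hs.le
  constructor
  · refine hJf.trans ?_
    apply div_le_div_of_nonneg_right ?_ hs.le
    have : 0 ≤ C/(2*a) := by positivity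
    linarith
  · have hJf1 : Jf1 x = (vv x - Jf x / (2 * Real.sqrt x)) / Real.sqrt x := by
      rw [vv]; field_simp; ring
    rw [hJf1, abs_div, abs_of_pos hs]
    apply div_le_div_of_nonneg_right ?_ hs.le
    have habs : |vv x - Jf x / (2 * Real.sqrt x)| ≤ |vv x| + |Jf x| / (2 * Real.sqrt x) := by
      refine (abs_sub _ _).trans ?_
      rw [abs_div, abs_of_pos (by positivity : (0:ℝ) < 2 * Real.sqrt x)]
    have hterm : |Jf x| / (2 * Real.sqrt x) ≤ C / (2 * a) := by
      have h5 : |Jf x| / (2 * Real.sqrt x) ≤ (C / Real.sqrt x) / (2 * Real.sqrt x) := by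
        apply div_le_div_of_nonneg_right hJf (by positivity)
      have h6 : (C / Real.sqrt x) / (2 * Real.sqrt x) = C / (2 * x) := by
        rw [div_div]
        congr 1
        rw [mul_comm (Real.sqrt x) _, mul_assoc]
        congr 1
        nlinarith
      rw [h6] at h5
      refine h5.trans ?_
      apply div_le_div_of_nonneg_left hC0 (by positivity) (by linarith)
    linarith

lemma continuous_Jf : Continuous Jf :=
  continuous_iff_continuousAt.2 fun x => (hasDerivAt_Jf x).continuousAt

lemma integrable_Jf_div {ρ : ℝ} (hρ : 0 < ρ) (m : ℕ) (hm : 1 ≤ m) :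
    IntegrableOn (fun x => Jf x / x^m) (Set.Ioi ρ) := by
  obtain ⟨D, hD0, hD⟩ := decay hρ
  have hint : IntegrableOn (fun x => D * x ^ (-((m:ℝ)+1/2))) (Set.Ioi ρ) := by
    refine Integrable.const_mul ?_ D
    refine integrableOn_Ioi_rpow_of_lt ?_ hρ
    have : (1:ℝ) ≤ (m:ℝ) := by exact_mod_cast hm
    linarith
  refine hint.mono' ?_ ?_
  · refine ContinuousOn.aestronglyMeasurable ?_ measurableSet_Ioi
    exact ContinuousOn.div continuous_Jf.continuousOn (continuous_pow m).continuousOn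
      (fun x hx => pow_ne_zero m (ne_of_gt (hρ.trans hx)))
  · refine ae_restrict_of_forall_mem measurableSet_Ioi (fun x hx => ?_)
    have hx0 : (0:ℝ) < x := hρ.trans hx
    have hs : (0:ℝ) < Real.sqrt x := Real.sqrt_pos.2 hx0
    rw [Real.norm_eq_abs, abs_div, abs_of_pos (pow_pos hx0 m)]
    calc |Jf x| / x^m ≤ (D / Real.sqrt x) / x^m :=
          div_le_div_of_nonneg_right ((hD x (le_of_lt hx)).1) (pow_pos hx0 m).le
      _ = D * x^(-((m:ℝ)+1/2)) := by
          rw [Real.rpow_neg hx0.le, Real.rpow_add hx0, Real.rpow_natCast,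
            ← Real.sqrt_eq_rpow]
          field_simp

lemma tendsto_aux {f : ℝ → ℝ} {D : ℝ} (hf : ∀ x, 1 ≤ x → |f x| ≤ D / Real.sqrt x)
    (m : ℕ) : Tendsto (fun x => f x / x^m) atTop (𝓝 0) := by
  apply squeeze_zero_norm' (a := fun x => D * x ^ (-((m:ℝ)+1/2)))
  · filter_upwards [eventually_ge_atTop (1:ℝ)] with x hx
    have hx0 : (0:ℝ) < x := lt_of_lt_of_le zero_lt_one hx
    have hs : (0:ℝ) < Real.sqrt x := Real.sqrt_pos.2 hx0
    rw [Real.norm_eq_abs, abs_div, abs_of_pos (pow_pos hx0 m)]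
    calc |f x| / x^m ≤ (D / Real.sqrt x) / x^m :=
          div_le_div_of_nonneg_right (hf x hx) (pow_pos hx0 m).le
      _ = D * x^(-((m:ℝ)+1/2)) := by
          rw [Real.rpow_neg hx0.le, Real.rpow_add hx0, Real.rpow_natCast,
            ← Real.sqrt_eq_rpow]
          field_simp
  · have h := tendsto_rpow_neg_atTop (y := (m:ℝ)+1/2) (by positivity)
    simpa using h.const_mul D

lemma hasDerivAt_F (l : ℕ) {y : ℝ} (hy : 0 < y) :
    HasDerivAt (fun z => -(((l:ℝ)+2) * (Jf z / z^(l+2)) + Jf1 z / z^(l+1)))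
      ((((l:ℝ)+2)^2 - 1) * (Jf y / y^(l+3)) + Jf y / y^(l+1)) y := by
  have hy0 : y ≠ 0 := hy.ne'
  have hpow1 : HasDerivAt (fun z : ℝ => z^(l+2)) (((l:ℝ)+2) * y^(l+1)) y := by
    simpa using hasDerivAt_pow (l+2) y
  have hpow2 : HasDerivAt (fun z : ℝ => z^(l+1)) (((l:ℝ)+1) * y^l) y := by
    simpa using hasDerivAt_pow (l+1) y
  have h1 := ((hasDerivAt_Jf y).div hpow1 (pow_ne_zero _ hy0)).const_mul ((l:ℝ)+2)
  have h2 := (hasDerivAt_Jf1 y).div hpow2 (pow_ne_zero _ hy0)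
  have h := (h1.add h2).neg
  refine h.congr_deriv (Eq.symm ?_)
  have hode := ode y
  field_simp
  linear_combination (y^l)^4 * y^6 * hode

theorem stmt_4 (n : ℕ) (hn : 0 < n) (ρ : ℝ) (hρ : 0 < ρ) :
    ∫ x in Set.Ioi ρ, besselJ 1 x / x ^ (2 * n + 1) =
      (1 / (4 * (n : ℝ) ^ 2 - 1)) *
        (2 * n * besselJ 1 ρ / ρ ^ (2 * n) + deriv (besselJ 1) ρ / ρ ^ (2 * n - 1)
          - ∫ x in Set.Ioi ρ, besselJ 1 x / x ^ (2 * n - 1)) := by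
  obtain ⟨l, hl⟩ : ∃ l, 2*n = l+2 := ⟨2*n-2, by omega⟩
  have e1 : 2*n-1 = l+1 := by omega
  have e3 : 2*n+1 = l+3 := by omega
  rw [besselJ_eq_Jf, e1, e3, hl, (hasDerivAt_Jf ρ).deriv]
  have int3 := integrable_Jf_div hρ (l+3) (by omega)
  have int1 := integrable_Jf_div hρ (l+1) (by omega)
  have intg : IntegrableOn
      (fun x => (((l:ℝ)+2)^2-1) * (Jf x/x^(l+3)) + Jf x/x^(l+1)) (Set.Ioi ρ) :=
    (int3.const_mul _).add int1
  obtain ⟨D, hD0, hD⟩ := decay zero_lt_one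
  have t3 : Tendsto (fun z:ℝ => Jf z / z^(l+2)) atTop (𝓝 0) :=
    tendsto_aux (fun x hx => (hD x hx).1) (l+2)
  have t1 : Tendsto (fun z:ℝ => Jf1 z / z^(l+1)) atTop (𝓝 0) :=
    tendsto_aux (fun x hx => (hD x hx).2) (l+1)
  have tF : Tendsto (fun z => -(((l:ℝ)+2) * (Jf z / z^(l+2)) + Jf1 z / z^(l+1)))
      atTop (𝓝 0) := by
    have := ((t3.const_mul ((l:ℝ)+2)).add t1).neg
    simpa using this
  have key := integral_Ioi_of_hasDerivAt_of_tendsto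
    (f := fun z => -(((l:ℝ)+2) * (Jf z / z^(l+2)) + Jf1 z / z^(l+1)))
    (f' := fun x => (((l:ℝ)+2)^2-1) * (Jf x/x^(l+3)) + Jf x/x^(l+1))
    ((hasDerivAt_F l hρ).continuousAt.continuousWithinAt)
    (fun x hx => hasDerivAt_F l (hρ.trans hx))
    intg tF
  rw [integral_add (int3.const_mul _) int1, integral_const_mul] at key
  set I3 := ∫ x in Set.Ioi ρ, Jf x / x^(l+3) with hI3
  set I1 := ∫ x in Set.Ioi ρ, Jf x / x^(l+1) with hI1
  have h2n : (2:ℝ)*(n:ℝ) = (l:ℝ)+2 := by exact_mod_cast hl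
  have h4 : 4*(n:ℝ)^2 = ((l:ℝ)+2)^2 := by nlinarith [h2n]
  have hn1 : (1:ℝ) ≤ (n:ℝ) := by exact_mod_cast hn
  have hne : 4*(n:ℝ)^2 - 1 ≠ 0 := by nlinarith
  have hgoal : (4*(n:ℝ)^2 - 1) * I3 =
      2*(n:ℝ)*Jf ρ/ρ^(l+2) + Jf1 ρ/ρ^(l+1) - I1 := by
    linear_combination key + I3 * h4 - (Jf ρ/ρ^(l+2)) * h2n
  rw [← hgoal, one_div, inv_mul_cancel_left₀ hne]
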